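/- The squared exponential kernel matrix of M pairwise distinct points in ℝ^d is positive definite, hence has strictly positive determinant. -/

import Mathlib

open Finset Matrix

lemma interp {d M : ℕ} (x : Fin M → EuclideanSpace ℝ (Fin d))
    (hx : Function.Injective x) (b : Fin M → ℝ) (hb : b ≠ 0) :
    ∃ (n : ℕ) (g : Fin n → Fin d), ∑ i, b i * ∏ m, x i (g m) ≠ 0 := by
  by_contra hcon
  push_neg at hcon
  -- generalize to products over finsets
  have H' : ∀ (s : Finset (Fin M)) (k : Fin M → Fin d),
      ∑ i, b i * ∏ j ∈ s, x i (k j) = 0 := by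
    intro s k
    have e := s.equivFin
    have hprod : ∀ i : Fin M, ∏ j ∈ s, x i (k j)
        = ∏ m : Fin s.card, x i (k (e.symm m)) := by
      intro i
      rw [← Finset.prod_coe_sort s (fun j => x i (k j))]
      exact (Equiv.prod_comp e.symm (fun j : s => x i (k j))).symm
    simp_rw [hprod]
    exact hcon s.card (fun m => k (e.symm m))
  obtain ⟨i₀, hi₀⟩ := Function.ne_iff.mp hb
  simp only [Pi.zero_apply] at hi₀
  have hdiff : ∀ j : Fin M, j ≠ i₀ → ∃ kk, x i₀ kk ≠ x j kk := by
    intro j hj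
    have hne : x i₀ ≠ x j := fun h => hj (hx h).symm
    by_contra hc
    push_neg at hc
    exact hne (WithLp.ofLp_injective 2 (funext hc))
  by_cases hex : ∃ j : Fin M, j ≠ i₀
  case neg =>
    push_neg at hex
    have h0 := hcon 0 Fin.elim0
    simp only [Finset.univ_unique, Fin.prod_univ_zero, mul_one] at h0
    have : ∑ i, b i = b i₀ := by
      rw [Finset.sum_eq_single i₀ (fun j _ hj => absurd (hex j) (by simpa using hj))
        (fun h => absurd (mem_univ i₀) h)]
    exact hi₀ (this ▸ h0)
  obtain ⟨j₁, hj₁⟩ := hex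
  have : Nonempty (Fin d) := ⟨(hdiff j₁ hj₁).choose⟩
  have hk : ∀ j : Fin M, ∃ kk : Fin d, j ≠ i₀ → x i₀ kk ≠ x j kk := by
    intro j
    by_cases hj : j = i₀
    · exact ⟨Classical.arbitrary _, fun h => absurd hj h⟩
    · obtain ⟨kk, hkk⟩ := hdiff j hj
      exact ⟨kk, fun _ => hkk⟩
  choose k hkspec using hk
  set s : Finset (Fin M) := univ.erase i₀ with hs
  have key : ∑ i, b i * ∏ j ∈ s, (x i (k j) - x j (k j)) = 0 := by
    have expand : ∀ i, ∏ j ∈ s, (x i (k j) - x j (k j))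
        = ∑ t ∈ s.powerset, (∏ j ∈ t, x i (k j)) * ∏ j ∈ s \ t, (-(x j (k j))) := by
      intro i
      simp_rw [sub_eq_add_neg]
      exact Finset.prod_add _ _ _
    simp_rw [expand, Finset.mul_sum]
    rw [Finset.sum_comm]
    apply Finset.sum_eq_zero
    intro t _
    have : ∀ i : Fin M, b i * ((∏ j ∈ t, x i (k j)) * ∏ j ∈ s \ t, (-(x j (k j))))
        = (∏ j ∈ s \ t, (-(x j (k j)))) * (b i * ∏ j ∈ t, x i (k j)) := fun i => by ring
    simp_rw [this, ← Finset.mul_sum, H' t k, mul_zero]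
  have hzero : ∀ j ∈ (univ : Finset (Fin M)), j ≠ i₀ →
      b j * ∏ j' ∈ s, (x j (k j') - x j' (k j')) = 0 := by
    intro j _ hj
    have : (x j (k j) - x j (k j)) = 0 := by ring
    rw [Finset.prod_eq_zero (Finset.mem_erase.mpr ⟨hj, mem_univ j⟩) this, mul_zero]
  rw [Finset.sum_eq_single i₀ hzero (fun h => absurd (mem_univ i₀) h)] at key
  have hP : ∏ j ∈ s, (x i₀ (k j) - x j (k j)) ≠ 0 := by
    apply Finset.prod_ne_zero_iff.mpr
    intro j hj
    have := hkspec j (Finset.mem_erase.mp hj).1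
    exact sub_ne_zero_of_ne this
  exact hi₀ (by rcases mul_eq_zero.mp key with h | h; exact h; exact absurd h hP)

lemma expand_pow {d M : ℕ} (x : Fin M → EuclideanSpace ℝ (Fin d)) (b : Fin M → ℝ) (n : ℕ) :
    ∑ p : Fin M × Fin M, b p.1 * b p.2 * (inner ℝ (x p.1) (x p.2) : ℝ) ^ n
    = ∑ g ∈ Fintype.piFinset (fun _ : Fin n => (univ : Finset (Fin d))),
        (∑ i, b i * ∏ m, x i (g m)) ^ 2 := by
  have hinner : ∀ i j : Fin M, (inner ℝ (x i) (x j) : ℝ) = ∑ k, x i k * x j k := by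
    intro i j
    simp [PiLp.inner_apply, RCLike.inner_apply, mul_comm]
  calc ∑ p : Fin M × Fin M, b p.1 * b p.2 * (inner ℝ (x p.1) (x p.2) : ℝ) ^ n
      = ∑ p : Fin M × Fin M, ∑ g ∈ Fintype.piFinset (fun _ : Fin n => (univ : Finset (Fin d))),
          (b p.1 * ∏ m, x p.1 (g m)) * (b p.2 * ∏ m, x p.2 (g m)) := by
        refine Finset.sum_congr rfl fun p _ => ?_
        rw [hinner, Finset.sum_pow', Finset.mul_sum]
        refine Finset.sum_congr rfl fun g _ => ?_
        rw [Finset.prod_mul_distrib]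
        ring
    _ = ∑ g ∈ Fintype.piFinset (fun _ : Fin n => (univ : Finset (Fin d))),
          ∑ p : Fin M × Fin M, (b p.1 * ∏ m, x p.1 (g m)) * (b p.2 * ∏ m, x p.2 (g m)) :=
        Finset.sum_comm
    _ = ∑ g ∈ Fintype.piFinset (fun _ : Fin n => (univ : Finset (Fin d))),
          (∑ i, b i * ∏ m, x i (g m)) ^ 2 := by
        refine Finset.sum_congr rfl fun g _ => ?_
        rw [sq, Finset.sum_mul_sum, Fintype.sum_prod_type]

lemma key {d M : ℕ} (t : ℝ) (ht : 0 < t) (x : Fin M → EuclideanSpace ℝ (Fin d))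
    (hx : Function.Injective x) (b : Fin M → ℝ) (hb : b ≠ 0) :
    0 < ∑ p : Fin M × Fin M, b p.1 * b p.2 * Real.exp (t * (inner ℝ (x p.1) (x p.2) : ℝ)) := by
  set F : Fin M × Fin M → ℕ → ℝ := fun p n =>
    t ^ n / (n.factorial : ℝ) * (b p.1 * b p.2 * (inner ℝ (x p.1) (x p.2) : ℝ) ^ n) with hF
  have hsumF : ∀ p : Fin M × Fin M, Summable (F p) := by
    intro p
    have h1 := (Real.summable_pow_div_factorial
      (t * (inner ℝ (x p.1) (x p.2) : ℝ))).mul_left (b p.1 * b p.2)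
    refine h1.congr fun n => ?_
    rw [hF]; simp only []
    rw [mul_pow]; ring
  have hexp : ∀ p : Fin M × Fin M,
      b p.1 * b p.2 * Real.exp (t * (inner ℝ (x p.1) (x p.2) : ℝ)) = ∑' n, F p n := by
    intro p
    rw [Real.exp_eq_exp_ℝ, NormedSpace.exp_eq_tsum_div, ← tsum_mul_left]
    congr 1
    funext n
    rw [hF]; simp only []
    rw [mul_pow]; ring
  simp_rw [hexp]
  rw [show (∑ p : Fin M × Fin M, ∑' n, F p n)
      = ∑ p ∈ (univ : Finset (Fin M × Fin M)), ∑' n, F p n from rfl,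
    ← Summable.tsum_finsetSum (fun p _ => hsumF p)]
  have hsumn : Summable fun n => ∑ p ∈ (univ : Finset (Fin M × Fin M)), F p n :=
    summable_sum fun p _ => hsumF p
  have hval : ∀ n : ℕ, ∑ p ∈ (univ : Finset (Fin M × Fin M)), F p n
      = t ^ n / (n.factorial : ℝ) * ∑ g ∈ Fintype.piFinset (fun _ : Fin n => (univ : Finset (Fin d))),
          (∑ i, b i * ∏ m, x i (g m)) ^ 2 := by
    intro n
    rw [← expand_pow x b n, ← Finset.mul_sum]
  have hnonneg : ∀ n : ℕ, 0 ≤ ∑ p ∈ (univ : Finset (Fin M × Fin M)), F p n := by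
    intro n
    rw [hval]
    apply mul_nonneg (by positivity)
    exact Finset.sum_nonneg fun g _ => sq_nonneg _
  obtain ⟨n₀, g₀, hg₀⟩ := interp x hx b hb
  have hpos : 0 < ∑ p ∈ (univ : Finset (Fin M × Fin M)), F p n₀ := by
    rw [hval]
    apply mul_pos (by positivity)
    apply Finset.sum_pos' (fun g _ => sq_nonneg _)
    exact ⟨g₀, by simp [Fintype.mem_piFinset], pow_pos (abs_pos.mpr hg₀) 2 |> (by
      simpa [sq_abs] using ·)⟩
  exact Summable.tsum_pos hsumn hnonneg n₀ hpos

theorem stmt_17 (d M : ℕ) (l : ℝ) (hl : 0 < l)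
    (x : Fin M → EuclideanSpace ℝ (Fin d)) (hx : Function.Injective x) :
    (Matrix.of fun i j : Fin M =>
        Real.exp (-‖x i - x j‖ ^ 2 / (2 * l ^ 2))).PosDef ∧
    0 < (Matrix.of fun i j : Fin M =>
        Real.exp (-‖x i - x j‖ ^ 2 / (2 * l ^ 2))).det := by
  have hl2 : (0:ℝ) < l ^ 2 := by positivity
  have hentry : ∀ i j : Fin M, Real.exp (-‖x i - x j‖ ^ 2 / (2 * l ^ 2))
      = Real.exp (-‖x i‖ ^ 2 / (2 * l ^ 2)) * Real.exp ((l ^ 2)⁻¹ * (inner ℝ (x i) (x j) : ℝ))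
        * Real.exp (-‖x j‖ ^ 2 / (2 * l ^ 2)) := by
    intro i j
    rw [← Real.exp_add, ← Real.exp_add]
    congr 1
    rw [norm_sub_sq_real]
    field_simp
    ring
  have hpd : (Matrix.of fun i j : Fin M =>
      Real.exp (-‖x i - x j‖ ^ 2 / (2 * l ^ 2))).PosDef := by
    rw [Matrix.posDef_iff_dotProduct_mulVec]
    constructor
    · ext i j
      simp only [Matrix.conjTranspose_apply, Matrix.of_apply, star_trivial]
      rw [norm_sub_rev]
    · intro c hc
      have hbb0 : (fun i => c i * Real.exp (-‖x i‖ ^ 2 / (2 * l ^ 2))) ≠ 0 := by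
        intro h
        apply hc
        funext i
        have h2 := congrFun h i
        simp only [Pi.zero_apply, mul_eq_zero] at h2
        rcases h2 with h2 | h2
        · exact h2
        · exact absurd h2 (Real.exp_ne_zero _)
      have hkey := key ((l ^ 2)⁻¹) (by positivity) x hx _ hbb0
      calc (0:ℝ) < ∑ p : Fin M × Fin M,
            (c p.1 * Real.exp (-‖x p.1‖ ^ 2 / (2 * l ^ 2)))
            * (c p.2 * Real.exp (-‖x p.2‖ ^ 2 / (2 * l ^ 2)))
            * Real.exp ((l ^ 2)⁻¹ * (inner ℝ (x p.1) (x p.2) : ℝ)) := hkey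
        _ = star c ⬝ᵥ ((Matrix.of fun i j : Fin M =>
              Real.exp (-‖x i - x j‖ ^ 2 / (2 * l ^ 2))) *ᵥ c) := by
            simp only [dotProduct, Matrix.mulVec, Matrix.of_apply, Pi.star_apply,
              star_trivial, dotProduct]
            rw [Fintype.sum_prod_type]
            refine Finset.sum_congr rfl fun i _ => ?_
            rw [Finset.mul_sum]
            refine Finset.sum_congr rfl fun j _ => ?_
            rw [hentry i j]
            ring
  exact ⟨hpd, hpd.det_pos⟩
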